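/- If X and Z are μ-comonotonic, with X = ∇V_X(U) and Z = ∇V_Z(U) for a common U distributed as μ and V_X, V_Z convex, then the μ-quantile of X + Z is ∇V_X + ∇V_Z, i.e., (∇(V_X+V_Z))_#μ = law(X+Z) and ∇(V_X+V_Z) is the gradient of a convex function. -/

import Mathlib

open MeasureTheory InnerProductSpace

/-- if X = ∇V_X(U) and Z = ∇V_Z(U) for a common U =_d μ with V_X, V_Z
convex (μ-comonotonicity), then the μ-quantile of X + Z is ∇(V_X + V_Z): the function
V_X + V_Z is convex, ∇(V_X+V_Z) = ∇V_X + ∇V_Z, and ∇(V_X+V_Z) pushes μ forward to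
the law of X+Z. -/
theorem stmt_14 {d : ℕ} {Ω : Type*} [MeasurableSpace Ω]
    (P : Measure Ω) [IsProbabilityMeasure P]
    (μ : Measure (EuclideanSpace ℝ (Fin d))) [IsProbabilityMeasure μ]
    (hac : μ ≪ volume) (hμ2 : MemLp id 2 μ)
    (VX VZ : EuclideanSpace ℝ (Fin d) → ℝ)
    (hVX : ConvexOn ℝ Set.univ VX) (hVZ : ConvexOn ℝ Set.univ VZ)
    (hVXd : Differentiable ℝ VX) (hVZd : Differentiable ℝ VZ)
    (U : Ω → EuclideanSpace ℝ (Fin d)) (hU : Measurable U) (hUlaw : P.map U = μ)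
    (X Z : Ω → EuclideanSpace ℝ (Fin d))
    (hX : X = fun ω => gradient VX (U ω)) (hZ : Z = fun ω => gradient VZ (U ω)) :
    ConvexOn ℝ Set.univ (fun x => VX x + VZ x) ∧
    (∀ u, gradient (fun x => VX x + VZ x) u = gradient VX u + gradient VZ u) ∧
    μ.map (fun u => gradient (fun x => VX x + VZ x) u)
      = P.map (fun ω => X ω + Z ω) := by
  have hgrad : ∀ u, gradient (fun x => VX x + VZ x) u
      = gradient VX u + gradient VZ u := by
    intro u
    have h1 := (hVXd u).hasGradientAt.hasFDerivAt
    have h2 := (hVZd u).hasGradientAt.hasFDerivAt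
    have h3 : HasGradientAt (fun x => VX x + VZ x)
        (gradient VX u + gradient VZ u) u := by
      rw [hasGradientAt_iff_hasFDerivAt, map_add]
      exact h1.add h2
    exact h3.gradient
  refine ⟨hVX.add hVZ, hgrad, ?_⟩
  have hmX : Measurable (gradient VX) := by
    have : Measurable (fderiv ℝ VX) := measurable_fderiv ℝ VX
    exact ((toDual ℝ (EuclideanSpace ℝ (Fin d))).symm.continuous.measurable).comp this
  have hmZ : Measurable (gradient VZ) := by
    have : Measurable (fderiv ℝ VZ) := measurable_fderiv ℝ VZ
    exact ((toDual ℝ (EuclideanSpace ℝ (Fin d))).symm.continuous.measurable).comp this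
  have hg : Measurable (fun u => gradient VX u + gradient VZ u) := hmX.add hmZ
  have : μ.map (fun u => gradient (fun x => VX x + VZ x) u)
      = μ.map (fun u => gradient VX u + gradient VZ u) := by
    congr 1; funext u; exact hgrad u
  rw [this, ← hUlaw, Measure.map_map hg hU]
  subst hX hZ
  rfl
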